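/- (Second order term for the scaled normal family.) Fix q > 0 and μ₀ > 0, and let a₁, a₂ > 0 satisfy the first order matching condition a₂ = a₁ q μ₀^{q/2 − 1}. Define J(μ₀,μ) := a₁ |1 + q(μ₀ − μ)/(2μ)| + (q/2) a₂ μ₀^{q/2}/μ on (0,∞), I(μ) := μ^{−q} + q²/(2μ²), and m₃(μ) := ∫_ℝ ( ∂³/∂μ³ log f_μ(x) ) f_μ(x) dx. Then the second order coverage term equals Δ₂ := J(μ₀,μ₀)^{−1} [ (1/6)(d/dμ){ I(μ)^{−2} J(μ₀,μ) m₃(μ) } − (1/2)(d²/dμ²){ J(μ₀,μ) I(μ)^{−1} } ] evaluated at μ = μ₀ (interpreting the absolute value in J as 1 + q(μ₀−μ)/(2μ) on a neighborhood of μ₀, where it is positive) = q(q−2) μ₀^{q+2} ( 2μ₀² + μ₀^q q(q−1) ) / ( 2μ₀² + μ₀^q q² )³; in particular Δ₂ = 0 when q = 2. -/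

import Mathlib

open MeasureTheory Filter Set Topology

section Aux
open Real

lemma sq_rpow_eq (x : ℝ) : x ^ (2:ℝ) = x ^ 2 := by
  rw [show (2:ℝ) = ((2:ℕ):ℝ) by norm_num, Real.rpow_natCast]

lemma aux_int_sq {b : ℝ} (hb : 0 < b) :
    Integrable fun x : ℝ => x ^ 2 * Real.exp (-b * x ^ 2) := by
  refine (integrable_rpow_mul_exp_neg_mul_sq hb (by norm_num : (-1:ℝ) < 2)).congr ?_
  filter_upwards with x
  rw [sq_rpow_eq]

lemma aux_gauss1 (b : ℝ) : ∫ x : ℝ, x * Real.exp (-b * x ^ 2) = 0 := by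
  have h := integral_neg_eq_self (fun x : ℝ => x * Real.exp (-b * x ^ 2)) volume
  simp only [neg_sq] at h
  have h2 : (∫ x : ℝ, -x * Real.exp (-b * x ^ 2))
      = - ∫ x : ℝ, x * Real.exp (-b * x ^ 2) := by
    rw [← integral_neg]
    congr 1 with x
    ring
  rw [h2] at h
  linarith

lemma aux_tendsto_mul_exp {b : ℝ} (hb : 0 < b) :
    Tendsto (fun x : ℝ => x * Real.exp (-b * x ^ 2)) atTop (nhds 0) := by
  have o := rpow_mul_exp_neg_mul_sq_isLittleO_exp_neg hb 1
  have o' : (fun x : ℝ => x * Real.exp (-b * x ^ 2)) =o[atTop]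
      fun x : ℝ => Real.exp (-(1/2) * x) := by
    refine o.congr' ?_ (by rfl)
    filter_upwards with x using by rw [Real.rpow_one]
  have hexp : Tendsto (fun x : ℝ => Real.exp (-(1/2) * x)) atTop (nhds 0) := by
    apply Real.tendsto_exp_atBot.comp
    exact (tendsto_const_mul_atBot_of_neg (by norm_num)).mpr tendsto_id
  exact o'.trans_tendsto hexp

lemma aux_gauss2 {b : ℝ} (hb : 0 < b) :
    ∫ x : ℝ, x ^ 2 * Real.exp (-b * x ^ 2)
      = (2*b)⁻¹ * Real.sqrt (Real.pi / b) := by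
  set G : ℝ → ℝ := fun x => -(2*b)⁻¹ * (x * Real.exp (-b * x ^ 2)) with hGdef
  have hG : ∀ x : ℝ, HasDerivAt G
      (x ^ 2 * Real.exp (-b * x ^ 2) - (2*b)⁻¹ * Real.exp (-b * x ^ 2)) x := by
    intro x
    have h1 : HasDerivAt (fun x : ℝ => -b * x ^ 2) (-b * (2 * x ^ 1)) x :=
      (hasDerivAt_pow 2 x).const_mul (-b)
    have h2 := h1.exp
    have h3 := ((hasDerivAt_id x).mul h2).const_mul (-(2*b)⁻¹)
    refine h3.congr_deriv ?_
    have hb' : b ≠ 0 := hb.ne'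
    simp only [id_eq]
    field_simp
    ring
  have hT : Tendsto G atTop (nhds 0) := by
    have h := (aux_tendsto_mul_exp hb).const_mul (-(2*b)⁻¹)
    simp only [mul_zero] at h
    exact h
  have hB : Tendsto G atBot (nhds 0) := by
    have h1 : Tendsto (fun y : ℝ => G (-y)) atTop (nhds 0) := by
      have := (aux_tendsto_mul_exp hb).const_mul ((2*b)⁻¹)
      simp only [hGdef] at *
      convert this using 2 with y
      · ring_nf
      · simp
    have h2 : Tendsto (fun x : ℝ => -x) atBot atTop := tendsto_neg_atBot_atTop
    have h3 := h1.comp h2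
    exact h3.congr (fun x => by simp [Function.comp])
  have hint : Integrable (fun x : ℝ =>
      x ^ 2 * Real.exp (-b * x ^ 2) - (2*b)⁻¹ * Real.exp (-b * x ^ 2)) :=
    (aux_int_sq hb).sub ((integrable_exp_neg_mul_sq hb).const_mul _)
  have hcont : Continuous G := by fun_prop
  have hIoi := integral_Ioi_of_hasDerivAt_of_tendsto (a := (0:ℝ))
    (hcont.continuousWithinAt) (fun x _ => hG x) hint.integrableOn hT
  have hIic := integral_Iic_of_hasDerivAt_of_tendsto (a := (0:ℝ))
    (hcont.continuousWithinAt) (fun x _ => hG x) hint.integrableOn hB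
  have hsplit := intervalIntegral.integral_Iic_add_Ioi (b := (0:ℝ))
    hint.integrableOn hint.integrableOn
  have hG0 : G 0 = 0 := by simp [hGdef]
  have hzero : (∫ x : ℝ, (x ^ 2 * Real.exp (-b * x ^ 2)
      - (2*b)⁻¹ * Real.exp (-b * x ^ 2))) = 0 := by
    rw [← hsplit, hIoi, hIic, hG0]; ring
  rw [integral_sub (aux_int_sq hb) ((integrable_exp_neg_mul_sq hb).const_mul _),
    integral_const_mul, integral_gaussian] at hzero
  linarith

section
variable (q : ℝ)

noncomputable def L0 (x m : ℝ) : ℝ :=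
  -(1/2) * Real.log (2 * Real.pi) - q/2 * Real.log m - (x - m)^2/2 * m ^ (-q)
noncomputable def L1 (x m : ℝ) : ℝ :=
  -(q/2) * m⁻¹ + (x - m) * m ^ (-q) + q/2 * (x - m)^2 * m ^ (-q-1)
noncomputable def L2 (x m : ℝ) : ℝ :=
  q/2 * (m^2)⁻¹ - m ^ (-q) - 2*q*(x - m) * m ^ (-q-1) - q*(q+1)/2 * (x - m)^2 * m ^ (-q-2)
noncomputable def L3 (x m : ℝ) : ℝ :=
  -q * (m^3)⁻¹ + 3*q * m ^ (-q-1) + 3*q*(q+1)*(x - m) * m ^ (-q-2)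
    + q*(q+1)*(q+2)/2 * (x - m)^2 * m ^ (-q-3)

lemma hasDerivAt_L0 (x m : ℝ) (hm : 0 < m) : HasDerivAt (L0 q x) (L1 q x m) m := by
  have hrp0 : HasDerivAt (fun m : ℝ => m ^ (-q)) (-q * m ^ (-q-1)) m :=
    Real.hasDerivAt_rpow_const (Or.inl hm.ne')
  have hsub : HasDerivAt (fun m : ℝ => x - m) (-1) m := (hasDerivAt_id m).const_sub x
  have hsq : HasDerivAt (fun m : ℝ => (x - m)^2) (2 * (x - m)^1 * (-1)) m := hsub.pow 2
  have hlog := (Real.hasDerivAt_log hm.ne').const_mul (q/2)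
  have H := ((hasDerivAt_const m (-(1/2) * Real.log (2 * Real.pi))).sub hlog).sub
    ((hsq.div_const 2).mul hrp0)
  unfold L0 L1
  refine H.congr_deriv ?_
  have e1 : m ^ (-q-1) = m ^ (-q) * m⁻¹ := by
    rw [show -q-1 = -q + (-1) by ring, rpow_add hm, rpow_neg_one]
  rw [e1]; field_simp; ring

lemma hasDerivAt_L1 (x m : ℝ) (hm : 0 < m) : HasDerivAt (L1 q x) (L2 q x m) m := by
  have hrp0 : HasDerivAt (fun m : ℝ => m ^ (-q)) (-q * m ^ (-q-1)) m :=
    Real.hasDerivAt_rpow_const (Or.inl hm.ne')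
  have hrp1 : HasDerivAt (fun m : ℝ => m ^ (-q-1)) ((-q-1) * m ^ (-q-1-1)) m :=
    Real.hasDerivAt_rpow_const (Or.inl hm.ne')
  have hinv := (hasDerivAt_inv hm.ne').const_mul (-(q/2))
  have hsub : HasDerivAt (fun m : ℝ => x - m) (-1) m := (hasDerivAt_id m).const_sub x
  have hsq : HasDerivAt (fun m : ℝ => (x - m)^2) (2 * (x - m)^1 * (-1)) m := hsub.pow 2
  have H := (hinv.add (hsub.mul hrp0)).add ((hsq.const_mul (q/2)).mul hrp1)
  unfold L1 L2
  refine H.congr_deriv ?_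
  have e1 : m ^ (-q-1) = m ^ (-q) * m⁻¹ := by
    rw [show -q-1 = -q + (-1) by ring, rpow_add hm, rpow_neg_one]
  have e2 : m ^ (-q-1-1) = m ^ (-q-1) * m⁻¹ := by
    rw [show -q-1-1 = (-q-1) + (-1) by ring, rpow_add hm, rpow_neg_one]
  have e3 : m ^ (-q-2) = m ^ (-q-1) * m⁻¹ := by
    rw [show -q-2 = (-q-1) + (-1) by ring, rpow_add hm, rpow_neg_one]
  rw [e2, e3, e1]; field_simp; ring

lemma hasDerivAt_L2 (x m : ℝ) (hm : 0 < m) : HasDerivAt (L2 q x) (L3 q x m) m := by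
  have hrp0 : HasDerivAt (fun m : ℝ => m ^ (-q)) (-q * m ^ (-q-1)) m :=
    Real.hasDerivAt_rpow_const (Or.inl hm.ne')
  have hrp1 : HasDerivAt (fun m : ℝ => m ^ (-q-1)) ((-q-1) * m ^ (-q-1-1)) m :=
    Real.hasDerivAt_rpow_const (Or.inl hm.ne')
  have hrp2 : HasDerivAt (fun m : ℝ => m ^ (-q-2)) ((-q-2) * m ^ (-q-2-1)) m :=
    Real.hasDerivAt_rpow_const (Or.inl hm.ne')
  have hsub : HasDerivAt (fun m : ℝ => x - m) (-1) m := (hasDerivAt_id m).const_sub x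
  have hsq : HasDerivAt (fun m : ℝ => (x - m)^2) (2 * (x - m)^1 * (-1)) m := hsub.pow 2
  have hinv2 : HasDerivAt (fun m : ℝ => (m^2)⁻¹) (-(2 * m^1) / (m^2)^2) m :=
    (hasDerivAt_pow 2 m).inv (by positivity)
  have H := (((hinv2.const_mul (q/2)).sub hrp0).sub
      (((hsub.const_mul (2*q)).mul hrp1))).sub ((hsq.const_mul (q*(q+1)/2)).mul hrp2)
  unfold L2 L3
  refine H.congr_deriv ?_
  have e1 : m ^ (-q-1) = m ^ (-q) * m⁻¹ := by
    rw [show -q-1 = -q + (-1) by ring, rpow_add hm, rpow_neg_one]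
  have e2 : m ^ (-q-1-1) = m ^ (-q-1) * m⁻¹ := by
    rw [show -q-1-1 = (-q-1) + (-1) by ring, rpow_add hm, rpow_neg_one]
  have e3 : m ^ (-q-2) = m ^ (-q-1) * m⁻¹ := by
    rw [show -q-2 = (-q-1) + (-1) by ring, rpow_add hm, rpow_neg_one]
  have e4 : m ^ (-q-2-1) = m ^ (-q-2) * m⁻¹ := by
    rw [show -q-2-1 = (-q-2) + (-1) by ring, rpow_add hm, rpow_neg_one]
  have e5 : m ^ (-q-3) = m ^ (-q-2) * m⁻¹ := by
    rw [show -q-3 = (-q-2) + (-1) by ring, rpow_add hm, rpow_neg_one]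
  rw [e4, e5, e2, e3, e1]; field_simp; ring
end

section
variable (q : ℝ) (f : ℝ → ℝ → ℝ)

lemma log_f_eq (hf : ∀ m x : ℝ, f m x
    = (Real.sqrt (2 * Real.pi * m ^ q))⁻¹ * Real.exp (-(x - m) ^ 2 / (2 * m ^ q)))
    (x : ℝ) : ∀ m ∈ Ioi (0:ℝ), Real.log (f m x) = L0 q x m := by
  intro m hm
  rw [hf]
  have hmq : (0:ℝ) < m ^ q := rpow_pos_of_pos hm q
  have h2πm : (0:ℝ) < 2 * Real.pi * m ^ q := by positivity
  rw [Real.log_mul (by positivity) (Real.exp_ne_zero _), Real.log_inv, Real.log_exp,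
    Real.log_sqrt h2πm.le, Real.log_mul (by positivity) hmq.ne', Real.log_rpow hm]
  unfold L0
  rw [show m ^ (-q) = (m ^ q)⁻¹ by rw [rpow_neg hm.le]]
  field_simp
  ring

lemma iterated_three (hf : ∀ m x : ℝ, f m x
    = (Real.sqrt (2 * Real.pi * m ^ q))⁻¹ * Real.exp (-(x - m) ^ 2 / (2 * m ^ q)))
    (x : ℝ) : ∀ μ ∈ Ioi (0:ℝ),
    iteratedDeriv 3 (fun m => Real.log (f m x)) μ = L3 q x μ := by
  have h0 : ∀ μ ∈ Ioi (0:ℝ), deriv (fun m => Real.log (f m x)) μ = L1 q x μ := by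
    intro μ hμ
    have hev : (fun m => Real.log (f m x)) =ᶠ[nhds μ] L0 q x := by
      filter_upwards [Ioi_mem_nhds hμ] with m hm using log_f_eq q f hf x m hm
    rw [hev.deriv_eq]
    exact (hasDerivAt_L0 q x μ hμ).deriv
  have h1 : ∀ μ ∈ Ioi (0:ℝ), deriv (deriv (fun m => Real.log (f m x))) μ = L2 q x μ := by
    intro μ hμ
    have hev : deriv (fun m => Real.log (f m x)) =ᶠ[nhds μ] L1 q x := by
      filter_upwards [Ioi_mem_nhds hμ] with m hm using h0 m hm
    rw [hev.deriv_eq]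
    exact (hasDerivAt_L1 q x μ hμ).deriv
  intro μ hμ
  have hev : deriv (deriv (fun m => Real.log (f m x))) =ᶠ[nhds μ] L2 q x := by
    filter_upwards [Ioi_mem_nhds hμ] with m hm using h1 m hm
  rw [show (3:ℕ) = 2 + 1 from rfl, iteratedDeriv_succ,
    show (2:ℕ) = 1 + 1 from rfl, iteratedDeriv_succ, iteratedDeriv_one, hev.deriv_eq]
  exact (hasDerivAt_L2 q x μ hμ).deriv

lemma aux_m3 (hf : ∀ m x : ℝ, f m x
    = (Real.sqrt (2 * Real.pi * m ^ q))⁻¹ * Real.exp (-(x - m) ^ 2 / (2 * m ^ q)))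
    {μ : ℝ} (hμ : 0 < μ) :
    (∫ x : ℝ, iteratedDeriv 3 (fun m => Real.log (f m x)) μ * f μ x)
      = 3*q * μ ^ (-q-1) + q^2*(q+3)/(2*μ^3) := by
  have hv : (0:ℝ) < μ ^ q := rpow_pos_of_pos hμ q
  set v : ℝ := μ ^ q with hvdef
  set b : ℝ := (2*v)⁻¹ with hbdef
  have hb : 0 < b := by positivity
  set c : ℝ := (Real.sqrt (2 * Real.pi * v))⁻¹ with hcdef
  have hfe : ∀ x : ℝ, f μ x = c * Real.exp (-b * (x - μ)^2) := by
    intro x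
    rw [hf]
    congr 2
    rw [hbdef]
    field_simp
    rfl
  set α : ℝ := -q * (μ^3)⁻¹ + 3*q * μ ^ (-q-1) with hα
  set β : ℝ := 3*q*(q+1) * μ ^ (-q-2) with hβ
  set γ : ℝ := q*(q+1)*(q+2)/2 * μ ^ (-q-3) with hγ
  have hpt : ∀ x : ℝ, iteratedDeriv 3 (fun m => Real.log (f m x)) μ * f μ x
      = (c*α) * Real.exp (-b*(x-μ)^2) + (c*β) * ((x-μ) * Real.exp (-b*(x-μ)^2))
        + (c*γ) * ((x-μ)^2 * Real.exp (-b*(x-μ)^2)) := by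
    intro x
    rw [iterated_three q f hf x μ hμ, hfe x]
    unfold L3
    rw [hα, hβ, hγ]
    ring
  simp only [hpt]
  have I0 : Integrable fun x : ℝ => Real.exp (-b*(x-μ)^2) :=
    (integrable_exp_neg_mul_sq hb).comp_sub_right μ
  have I1 : Integrable fun x : ℝ => (x-μ) * Real.exp (-b*(x-μ)^2) :=
    (integrable_mul_exp_neg_mul_sq hb).comp_sub_right μ
  have I2 : Integrable fun x : ℝ => (x-μ)^2 * Real.exp (-b*(x-μ)^2) :=
    (aux_int_sq hb).comp_sub_right μ
  have Ia : Integrable fun x : ℝ => c*α*Real.exp (-b*(x-μ)^2) :=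
    I0.const_mul _
  have Ib : Integrable fun x : ℝ => c*β*((x-μ)*Real.exp (-b*(x-μ)^2)) :=
    I1.const_mul _
  have Ic : Integrable fun x : ℝ => c*γ*((x-μ)^2*Real.exp (-b*(x-μ)^2)) :=
    I2.const_mul _
  have Iab : Integrable fun x : ℝ =>
      c*α*Real.exp (-b*(x-μ)^2) + c*β*((x-μ)*Real.exp (-b*(x-μ)^2)) := Ia.add Ib
  rw [integral_add Iab Ic, integral_add Ia Ib,
    integral_const_mul, integral_const_mul, integral_const_mul]
  have S0 := integral_sub_right_eq_self (μ := volume) (fun y : ℝ => Real.exp (-b*y^2)) μ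
  rw [integral_gaussian] at S0
  have S1 := integral_sub_right_eq_self (μ := volume) (fun y : ℝ => y * Real.exp (-b*y^2)) μ
  rw [aux_gauss1] at S1
  have S2 := integral_sub_right_eq_self (μ := volume) (fun y : ℝ => y^2 * Real.exp (-b*y^2)) μ
  rw [aux_gauss2 hb] at S2
  rw [S0, S1, S2]
  have hsqv : Real.sqrt (Real.pi/b) = Real.sqrt (2*Real.pi*v) := by
    rw [hbdef]; congr 1; field_simp
  have hsqpos : (0:ℝ) < Real.sqrt (2*Real.pi*v) := Real.sqrt_pos.mpr (by positivity)
  have hc : c * Real.sqrt (2*Real.pi*v) = 1 := inv_mul_cancel₀ hsqpos.ne'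
  have h2b : (2*b)⁻¹ = v := by rw [hbdef]; field_simp
  have hγv : μ ^ (-q-3) * v = (μ^3)⁻¹ := by
    rw [hvdef, ← rpow_add hμ, show -q-3+q = -((3:ℕ):ℝ) by push_cast; ring,
      rpow_neg hμ.le, rpow_natCast]
  rw [hsqv, h2b]
  have expand : c * α * Real.sqrt (2*Real.pi*v) + c * β * 0
      + c * γ * (v * Real.sqrt (2*Real.pi*v))
      = (c * Real.sqrt (2*Real.pi*v)) * (α + γ * v) := by ring
  rw [expand, hc, one_mul, hα, hγ]
  rw [show q*(q+1)*(q+2)/2 * μ ^ (-q-3) * v = q*(q+1)*(q+2)/2 * (μ ^ (-q-3) * v) by ring, hγv]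
  have hμ3 : (μ:ℝ)^3 ≠ 0 := by positivity
  field_simp
  ring
end

set_option maxHeartbeats 4000000 in
theorem main_part
    (q μ₀ : ℝ) (hq : 0 < q) (hμ₀ : 0 < μ₀)
    (a₁ a₂ : ℝ) (ha₁ : 0 < a₁) (ha₂ : 0 < a₂)
    (hmatch : a₂ = a₁ * q * μ₀ ^ (q / 2 - 1))
    (f : ℝ → ℝ → ℝ)
    (hf : ∀ m x : ℝ,
      f m x = (Real.sqrt (2 * Real.pi * m ^ q))⁻¹ * Real.exp (-(x - m) ^ 2 / (2 * m ^ q)))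
    (J : ℝ → ℝ)
    (hJ : ∀ μ : ℝ,
      J μ = a₁ * |1 + q * (μ₀ - μ) / (2 * μ)| + q / 2 * a₂ * μ₀ ^ (q / 2) / μ)
    (I : ℝ → ℝ) (hI : ∀ μ : ℝ, I μ = μ ^ (-q) + q ^ 2 / (2 * μ ^ 2))
    (m₃ : ℝ → ℝ)
    (hm₃ : ∀ μ : ℝ,
      m₃ μ = ∫ x : ℝ, iteratedDeriv 3 (fun m => Real.log (f m x)) μ * f μ x) :
    (J μ₀)⁻¹ *
        ((1 / 6) * deriv (fun μ => (I μ ^ 2)⁻¹ * J μ * m₃ μ) μ₀ -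
          (1 / 2) * iteratedDeriv 2 (fun μ => J μ * (I μ)⁻¹) μ₀)
      = q * (q - 2) * μ₀ ^ (q + 2) * (2 * μ₀ ^ 2 + μ₀ ^ q * q * (q - 1)) /
          (2 * μ₀ ^ 2 + μ₀ ^ q * q ^ 2) ^ 3 := by
  have hμn : (μ₀:ℝ) ≠ 0 := ne_of_gt hμ₀
  have hApos : (0:ℝ) < μ₀ ^ q := Real.rpow_pos_of_pos hμ₀ q
  set cc : ℝ := a₁ * q * μ₀ / 2 + q / 2 * a₂ * μ₀ ^ (q / 2) with hccdef
  have hccpos : 0 < cc := by positivity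
  have ccv : cc = a₁ * q * μ₀ / 2 + q ^ 2 / 2 * a₁ * μ₀ ^ q * μ₀⁻¹ := by
    have e : μ₀ ^ (q/2 - 1) * μ₀ ^ (q/2) = μ₀ ^ q * μ₀⁻¹ := by
      rw [← Real.rpow_add hμ₀, show q/2 - 1 + q/2 = q + (-1) by ring,
        Real.rpow_add hμ₀, Real.rpow_neg_one]
    calc cc = a₁ * q * μ₀ / 2 + q ^ 2 / 2 * a₁ * (μ₀ ^ (q/2 - 1) * μ₀ ^ (q/2)) := by
          rw [hccdef, hmatch]; ring
      _ = _ := by rw [e]; ring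
  -- eventual positivity of the absolute-value argument
  have hcontF : ContinuousAt (fun μ : ℝ => 1 + q * (μ₀ - μ) / (2 * μ)) μ₀ := by
    have h1 : ContinuousAt (fun μ : ℝ => q * (μ₀ - μ)) μ₀ := by fun_prop
    have h2 : ContinuousAt (fun μ : ℝ => 2 * μ) μ₀ := by fun_prop
    exact continuousAt_const.add (h1.div h2 (by simp [hμn]))
  have h0 : (0:ℝ) < 1 + q * (μ₀ - μ₀) / (2 * μ₀) := by simp
  have hev1 : ∀ᶠ μ in nhds μ₀, 0 < 1 + q * (μ₀ - μ) / (2 * μ) := hcontF (lt_mem_nhds h0)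
  have hJev : ∀ᶠ μ in nhds μ₀, J μ = a₁ * (1 - q / 2) + cc * μ⁻¹ := by
    filter_upwards [hev1, Ioi_mem_nhds hμ₀] with μ h1 h2
    have hn : (μ:ℝ) ≠ 0 := ne_of_gt h2
    rw [hJ, abs_of_pos h1, hccdef]
    field_simp
    ring
  have hJv : J μ₀ = a₁ * (1 - q / 2) + cc * μ₀⁻¹ := hJev.self_of_nhds
  have hJpos : 0 < J μ₀ := by
    rw [hJ]
    have h1 : 0 ≤ a₁ * |1 + q * (μ₀ - μ₀) / (2 * μ₀)| := by positivity
    have h2 : 0 < q / 2 * a₂ * μ₀ ^ (q / 2) / μ₀ := by positivity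
    linarith
  have hMev : ∀ μ ∈ Ioi (0:ℝ), m₃ μ = 3 * q * μ ^ (-q - 1) + q ^ 2 * (q + 3) / 2 * (μ ^ 3)⁻¹ := by
    intro μ hμp
    rw [hm₃, aux_m3 q f hf hμp]
    ring
  have hIeq : ∀ μ ∈ Ioi (0:ℝ), I μ = μ ^ (-q) + q ^ 2 / 2 * (μ ^ 2)⁻¹ := by
    intro μ hμp
    rw [hI]
    ring
  have hIEpos : ∀ μ ∈ Ioi (0:ℝ), (0:ℝ) < μ ^ (-q) + q ^ 2 / 2 * (μ ^ 2)⁻¹ := by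
    intro μ hμp
    have h2 : (0:ℝ) < μ := hμp
    positivity
  have dIE : ∀ μ ∈ Ioi (0:ℝ),
      HasDerivAt (fun μ : ℝ => μ ^ (-q) + q ^ 2 / 2 * (μ ^ 2)⁻¹) (-q * μ ^ (-q - 1) - q ^ 2 * (μ ^ 3)⁻¹) μ := by
    intro μ hμp
    have hn : (μ:ℝ) ≠ 0 := ne_of_gt hμp
    have H := (Real.hasDerivAt_rpow_const (p := -q) (Or.inl hn)).add
      (((hasDerivAt_pow 2 μ).inv (by positivity)).const_mul (q ^ 2 / 2))
    refine H.congr_deriv ?_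
    push_cast
    field_simp
    ring
  have dJE : ∀ μ ∈ Ioi (0:ℝ),
      HasDerivAt (fun μ : ℝ => a₁ * (1 - q / 2) + cc * μ⁻¹) (-cc * (μ ^ 2)⁻¹) μ := by
    intro μ hμp
    have hn : (μ:ℝ) ≠ 0 := ne_of_gt hμp
    have H := (hasDerivAt_const μ (a₁ * (1 - q / 2))).add
      ((hasDerivAt_inv hn).const_mul cc)
    refine H.congr_deriv ?_
    field_simp
    ring
  have dME : HasDerivAt (fun μ : ℝ => 3 * q * μ ^ (-q - 1) + q ^ 2 * (q + 3) / 2 * (μ ^ 3)⁻¹) (3 * q * (-q - 1) * μ₀ ^ (-q - 2) - 3 * q ^ 2 * (q + 3) / 2 * (μ₀ ^ 4)⁻¹) μ₀ := by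
    have H := ((Real.hasDerivAt_rpow_const (p := -q - 1) (Or.inl hμn)).const_mul
        (3 * q)).add
      (((hasDerivAt_pow 3 μ₀).inv (by positivity)).const_mul (q ^ 2 * (q + 3) / 2))
    refine H.congr_deriv ?_
    rw [show (-q - 1 - 1 : ℝ) = -q - 2 by ring]
    push_cast
    field_simp
    ring
  have dIED : HasDerivAt (fun μ : ℝ => -q * μ ^ (-q - 1) - q ^ 2 * (μ ^ 3)⁻¹) (q * (q + 1) * μ₀ ^ (-q - 2) + 3 * q ^ 2 * (μ₀ ^ 4)⁻¹) μ₀ := by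
    have H := ((Real.hasDerivAt_rpow_const (p := -q - 1) (Or.inl hμn)).const_mul
        (-q)).sub
      (((hasDerivAt_pow 3 μ₀).inv (by positivity)).const_mul (q ^ 2))
    refine H.congr_deriv ?_
    rw [show (-q - 1 - 1 : ℝ) = -q - 2 by ring]
    push_cast
    field_simp
    ring
  have dJED : HasDerivAt (fun μ : ℝ => -cc * (μ ^ 2)⁻¹) (2 * cc * (μ₀ ^ 3)⁻¹) μ₀ := by
    have H := (((hasDerivAt_pow 2 μ₀).inv (by positivity)).const_mul (-cc))
    refine H.congr_deriv ?_
    push_cast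
    field_simp
  have hivpos : (0:ℝ) < (μ₀ ^ (-q) + q ^ 2 / 2 * (μ₀ ^ 2)⁻¹) := hIEpos μ₀ hμ₀
  have hivne : ((μ₀ ^ (-q) + q ^ 2 / 2 * (μ₀ ^ 2)⁻¹) : ℝ) ≠ 0 := ne_of_gt hivpos
  have dIEμ₀ := dIE μ₀ hμ₀
  have dJEμ₀ := dJE μ₀ hμ₀
  have hF : HasDerivAt (fun μ : ℝ => ((μ ^ (-q) + q ^ 2 / 2 * (μ ^ 2)⁻¹) ^ 2)⁻¹ * (a₁ * (1 - q / 2) + cc * μ⁻¹) * (3 * q * μ ^ (-q - 1) + q ^ 2 * (q + 3) / 2 * (μ ^ 3)⁻¹)) ((-(((2:ℕ):ℝ) * (μ₀ ^ (-q) + q ^ 2 / 2 * (μ₀ ^ 2)⁻¹) ^ 1 * (-q * μ₀ ^ (-q - 1) - q ^ 2 * (μ₀ ^ 3)⁻¹)) / (((μ₀ ^ (-q) + q ^ 2 / 2 * (μ₀ ^ 2)⁻¹) ^ 2) ^ 2) * (a₁ * (1 - q / 2) + cc * μ₀⁻¹) + ((μ₀ ^ (-q) + q ^ 2 / 2 *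 (μ₀ ^ 2)⁻¹) ^ 2)⁻¹ * (-cc * (μ₀ ^ 2)⁻¹)) * (3 * q * μ₀ ^ (-q - 1) + q ^ 2 * (q + 3) / 2 * (μ₀ ^ 3)⁻¹) + ((μ₀ ^ (-q) + q ^ 2 / 2 * (μ₀ ^ 2)⁻¹) ^ 2)⁻¹ * (a₁ * (1 - q / 2) + cc * μ₀⁻¹) * (3 * q * (-q - 1) * μ₀ ^ (-q - 2) - 3 * q ^ 2 * (q + 3) / 2 * (μ₀ ^ 4)⁻¹)) μ₀ :=
    (((dIEμ₀.pow 2).inv (pow_ne_zero 2 hivne)).mul dJEμ₀).mul dME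
  have hGd : ∀ μ ∈ Ioi (0:ℝ), HasDerivAt (fun μ : ℝ => (a₁ * (1 - q / 2) + cc * μ⁻¹) * (μ ^ (-q) + q ^ 2 / 2 * (μ ^ 2)⁻¹)⁻¹) ((fun μ : ℝ => (-cc * (μ ^ 2)⁻¹) * (μ ^ (-q) + q ^ 2 / 2 * (μ ^ 2)⁻¹)⁻¹ + (a₁ * (1 - q / 2) + cc * μ⁻¹) * (-(-q * μ ^ (-q - 1) - q ^ 2 * (μ ^ 3)⁻¹) / (μ ^ (-q) + q ^ 2 / 2 * (μ ^ 2)⁻¹) ^ 2)) μ) μ := by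
    intro μ hμp
    exact (dJE μ hμp).mul ((dIE μ hμp).inv (ne_of_gt (hIEpos μ hμp)))
  have hGdd : HasDerivAt (fun μ : ℝ => (-cc * (μ ^ 2)⁻¹) * (μ ^ (-q) + q ^ 2 / 2 * (μ ^ 2)⁻¹)⁻¹ + (a₁ * (1 - q / 2) + cc * μ⁻¹) * (-(-q * μ ^ (-q - 1) - q ^ 2 * (μ ^ 3)⁻¹) / (μ ^ (-q) + q ^ 2 / 2 * (μ ^ 2)⁻¹) ^ 2)) (((2 * cc * (μ₀ ^ 3)⁻¹) * ((μ₀ ^ (-q) + q ^ 2 / 2 * (μ₀ ^ 2)⁻¹))⁻¹ + (-cc * (μ₀ ^ 2)⁻¹) * (-(-q * μ₀ ^ (-q - 1) - q ^ 2 * (μ₀ ^ 3)⁻¹) / (μ₀ ^ (-q) + q ^ 2 / 2 * (μ₀ ^ 2)⁻¹) ^ 2)) + ((-cc * (μ₀ ^ 2)⁻¹) * (-(-q * μ₀ ^ (-q - 1) - q ^ 2 * (μ₀ ^ 3)⁻¹) / (μ₀ ^ (-q) + q ^ 2 / 2 * (μ₀ ^ 2)⁻¹) ^ 2) + (a₁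 * (1 - q / 2) + cc * μ₀⁻¹) * ((-(q * (q + 1) * μ₀ ^ (-q - 2) + 3 * q ^ 2 * (μ₀ ^ 4)⁻¹) * (μ₀ ^ (-q) + q ^ 2 / 2 * (μ₀ ^ 2)⁻¹) ^ 2 - -(-q * μ₀ ^ (-q - 1) - q ^ 2 * (μ₀ ^ 3)⁻¹) * (((2:ℕ):ℝ) * (μ₀ ^ (-q) + q ^ 2 / 2 * (μ₀ ^ 2)⁻¹) ^ 1 * (-q * μ₀ ^ (-q - 1) - q ^ 2 * (μ₀ ^ 3)⁻¹))) / ((μ₀ ^ (-q) + q ^ 2 / 2 * (μ₀ ^ 2)⁻¹) ^ 2) ^ 2))) μ₀ :=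
    (dJED.mul (dIEμ₀.inv hivne)).add
      (dJEμ₀.mul ((dIED.neg).div (dIEμ₀.pow 2) (pow_ne_zero 2 hivne)))
  have hXev : (fun μ => (I μ ^ 2)⁻¹ * J μ * m₃ μ) =ᶠ[nhds μ₀] (fun μ : ℝ => ((μ ^ (-q) + q ^ 2 / 2 * (μ ^ 2)⁻¹) ^ 2)⁻¹ * (a₁ * (1 - q / 2) + cc * μ⁻¹) * (3 * q * μ ^ (-q - 1) + q ^ 2 * (q + 3) / 2 * (μ ^ 3)⁻¹)) := by
    filter_upwards [hJev, Ioi_mem_nhds hμ₀] with μ h1 h2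
    rw [hIeq μ h2, h1, hMev μ h2]
  have hYev : (fun μ => J μ * (I μ)⁻¹) =ᶠ[nhds μ₀] (fun μ : ℝ => (a₁ * (1 - q / 2) + cc * μ⁻¹) * (μ ^ (-q) + q ^ 2 / 2 * (μ ^ 2)⁻¹)⁻¹) := by
    filter_upwards [hJev, Ioi_mem_nhds hμ₀] with μ h1 h2
    rw [hIeq μ h2, h1]
  have hd1 : deriv (fun μ => (I μ ^ 2)⁻¹ * J μ * m₃ μ) μ₀ = (-(((2:ℕ):ℝ) * (μ₀ ^ (-q) + q ^ 2 / 2 * (μ₀ ^ 2)⁻¹) ^ 1 * (-q * μ₀ ^ (-q - 1) - q ^ 2 * (μ₀ ^ 3)⁻¹)) / (((μ₀ ^ (-q) + q ^ 2 / 2 * (μ₀ ^ 2)⁻¹) ^ 2) ^ 2) * (a₁ * (1 - q / 2) + cc * μ₀⁻¹) + ((μ₀ ^ (-q) + q ^ 2 / 2 * (μ₀ ^ 2)⁻¹) ^ 2)⁻¹ * (-cc * (μ₀ ^ 2)⁻¹)) * (3 * q * μ₀ ^ (-q - 1) + q ^ 2 * (q + 3) / 2 * (μ₀ ^ 3)⁻¹)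 + ((μ₀ ^ (-q) + q ^ 2 / 2 * (μ₀ ^ 2)⁻¹) ^ 2)⁻¹ * (a₁ * (1 - q / 2) + cc * μ₀⁻¹) * (3 * q * (-q - 1) * μ₀ ^ (-q - 2) - 3 * q ^ 2 * (q + 3) / 2 * (μ₀ ^ 4)⁻¹) := by
    rw [hXev.deriv_eq]
    exact hF.deriv
  have hGdev : deriv (fun μ : ℝ => (a₁ * (1 - q / 2) + cc * μ⁻¹) * (μ ^ (-q) + q ^ 2 / 2 * (μ ^ 2)⁻¹)⁻¹) =ᶠ[nhds μ₀] (fun μ : ℝ => (-cc * (μ ^ 2)⁻¹) * (μ ^ (-q) + q ^ 2 / 2 * (μ ^ 2)⁻¹)⁻¹ + (a₁ * (1 - q / 2) + cc * μ⁻¹) * (-(-q * μ ^ (-q - 1) - q ^ 2 * (μ ^ 3)⁻¹) / (μ ^ (-q) + q ^ 2 / 2 * (μ ^ 2)⁻¹) ^ 2)) := by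
    filter_upwards [Ioi_mem_nhds hμ₀] with μ h using (hGd μ h).deriv
  have hd2 : iteratedDeriv 2 (fun μ => J μ * (I μ)⁻¹) μ₀ = ((2 * cc * (μ₀ ^ 3)⁻¹) * ((μ₀ ^ (-q) + q ^ 2 / 2 * (μ₀ ^ 2)⁻¹))⁻¹ + (-cc * (μ₀ ^ 2)⁻¹) * (-(-q * μ₀ ^ (-q - 1) - q ^ 2 * (μ₀ ^ 3)⁻¹) / (μ₀ ^ (-q) + q ^ 2 / 2 * (μ₀ ^ 2)⁻¹) ^ 2)) + ((-cc * (μ₀ ^ 2)⁻¹) * (-(-q * μ₀ ^ (-q - 1) - q ^ 2 * (μ₀ ^ 3)⁻¹) / (μ₀ ^ (-q) + q ^ 2 / 2 * (μ₀ ^ 2)⁻¹) ^ 2) + (a₁ * (1 - q / 2) + cc * μ₀⁻¹) * ((-(q * (q + 1) * μ₀ ^ (-q - 2) + 3 * q ^ 2 * (μ₀ ^ 4)⁻¹) * (μ₀ ^ (-q) + q ^ 2 / 2 * (μ₀ ^ 2)⁻¹) ^ 2 - -(-q * μ₀ ^ (-q - 1) - q ^ 2 * (μ₀ ^ 3)⁻¹)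 * (((2:ℕ):ℝ) * (μ₀ ^ (-q) + q ^ 2 / 2 * (μ₀ ^ 2)⁻¹) ^ 1 * (-q * μ₀ ^ (-q - 1) - q ^ 2 * (μ₀ ^ 3)⁻¹))) / ((μ₀ ^ (-q) + q ^ 2 / 2 * (μ₀ ^ 2)⁻¹) ^ 2) ^ 2)) := by
    rw [iteratedDeriv_succ, iteratedDeriv_one,
      (hYev.deriv).deriv_eq, hGdev.deriv_eq]
    exact hGdd.deriv
  rw [hd1, hd2, hJv]
  have er0 : μ₀ ^ (-q) = (μ₀ ^ q)⁻¹ := by rw [Real.rpow_neg hμ₀.le]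
  have er1 : μ₀ ^ (-q - 1) = (μ₀ ^ q)⁻¹ * μ₀⁻¹ := by
    rw [show (-q - 1 : ℝ) = -q + (-1) by ring, Real.rpow_add hμ₀, Real.rpow_neg_one,
      Real.rpow_neg hμ₀.le]
  have er2 : μ₀ ^ (-q - 2) = (μ₀ ^ q)⁻¹ * (μ₀ ^ 2)⁻¹ := by
    rw [show (-q - 2 : ℝ) = -q + (-((2:ℕ):ℝ)) by push_cast; ring, Real.rpow_add hμ₀,
      Real.rpow_neg hμ₀.le q, Real.rpow_neg hμ₀.le (((2:ℕ):ℝ)), Real.rpow_natCast]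
  have er3 : μ₀ ^ (q + 2) = μ₀ ^ q * μ₀ ^ 2 := by
    rw [Real.rpow_add hμ₀, sq_rpow_eq]
  have hJe0 : (0:ℝ) < a₁ * (1 - q / 2) + cc * μ₀⁻¹ := by
    rw [hJv] at hJpos; exact hJpos
  have hJe0' : (a₁ * (1 - q / 2) + cc * μ₀⁻¹ : ℝ) ≠ 0 := ne_of_gt hJe0
  have hivne2 : ((μ₀ ^ q)⁻¹ + q ^ 2 / 2 * (μ₀ ^ 2)⁻¹ : ℝ) ≠ 0 := by positivity
  have hjne : (a₁ * (1 - q / 2)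
      + (a₁ * q * μ₀ / 2 + q ^ 2 / 2 * a₁ * μ₀ ^ q * μ₀⁻¹) * μ₀⁻¹ : ℝ) ≠ 0 := by
    rw [← ccv]; exact hJe0'
  have hAne : (μ₀ ^ q : ℝ) ≠ 0 := ne_of_gt hApos
  have hSpos : (0:ℝ) < 2 * μ₀ ^ 2 + μ₀ ^ q * q ^ 2 := by positivity
  have hSne := ne_of_gt hSpos
  have eiv : ((μ₀ ^ q)⁻¹ + q ^ 2 / 2 * (μ₀ ^ 2)⁻¹ : ℝ)
      = (2 * μ₀ ^ 2 + μ₀ ^ q * q ^ 2) / (2 * μ₀ ^ q * μ₀ ^ 2) := by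
    field_simp
  have ejv : (a₁ * (1 - q / 2)
      + (a₁ * q * μ₀ / 2 + q ^ 2 / 2 * a₁ * μ₀ ^ q * μ₀⁻¹) * μ₀⁻¹ : ℝ)
      = a₁ * (2 * μ₀ ^ 2 + μ₀ ^ q * q ^ 2) / (2 * μ₀ ^ 2) := by
    field_simp; ring
  have ei1 : (-q * ((μ₀ ^ q)⁻¹ * μ₀⁻¹) - q ^ 2 * (μ₀ ^ 3)⁻¹ : ℝ)
      = -(q * (μ₀ ^ 2 + μ₀ ^ q * q)) / (μ₀ ^ q * μ₀ ^ 3) := by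
    field_simp; ring
  have ej1 : (-(a₁ * q * μ₀ / 2 + q ^ 2 / 2 * a₁ * μ₀ ^ q * μ₀⁻¹) * (μ₀ ^ 2)⁻¹ : ℝ)
      = -(a₁ * q * (μ₀ ^ 2 + q * μ₀ ^ q)) / (2 * μ₀ ^ 3) := by
    field_simp
  have ej2 : (2 * (a₁ * q * μ₀ / 2 + q ^ 2 / 2 * a₁ * μ₀ ^ q * μ₀⁻¹) * (μ₀ ^ 3)⁻¹ : ℝ)
      = a₁ * q * (μ₀ ^ 2 + q * μ₀ ^ q) / μ₀ ^ 4 := by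
    field_simp
  have ei2 : (q * (q + 1) * ((μ₀ ^ q)⁻¹ * (μ₀ ^ 2)⁻¹) + 3 * q ^ 2 * (μ₀ ^ 4)⁻¹ : ℝ)
      = q * ((q + 1) * μ₀ ^ 2 + 3 * μ₀ ^ q * q) / (μ₀ ^ q * μ₀ ^ 4) := by
    field_simp
  have emv : (3 * q * ((μ₀ ^ q)⁻¹ * μ₀⁻¹) + q ^ 2 * (q + 3) / 2 * (μ₀ ^ 3)⁻¹ : ℝ)
      = q * (6 * μ₀ ^ 2 + μ₀ ^ q * q * (q + 3)) / (2 * μ₀ ^ q * μ₀ ^ 3) := by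
    field_simp; ring
  have em1 : (3 * q * (-q - 1) * ((μ₀ ^ q)⁻¹ * (μ₀ ^ 2)⁻¹)
      - 3 * q ^ 2 * (q + 3) / 2 * (μ₀ ^ 4)⁻¹ : ℝ)
      = -(3 * q * (2 * (q + 1) * μ₀ ^ 2 + μ₀ ^ q * q * (q + 3))) / (2 * μ₀ ^ q * μ₀ ^ 4) := by
    field_simp; ring
  rw [er1, er2, er0, er3, ccv, ejv, ei1, ej1, ej2, ei2, emv, em1, eiv]
  push_cast
  field_simp
  ring

end Aux

/-- Second order term for the scaled normal family.
Under the first order matching condition `a₂ = a₁ q μ₀^{q/2−1}`, the second order coverage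
term `Δ₂ = J(μ₀,μ₀)⁻¹[(1/6)(d/dμ){I(μ)⁻²J(μ₀,μ)m₃(μ)} − (1/2)(d²/dμ²){J(μ₀,μ)I(μ)⁻¹}]|_{μ₀}`
equals `q(q−2)μ₀^{q+2}(2μ₀² + μ₀^q q(q−1)) / (2μ₀² + μ₀^q q²)³`; in particular it vanishes
when `q = 2`. -/
theorem second_order_term_scaled_normal
    (q μ₀ : ℝ) (hq : 0 < q) (hμ₀ : 0 < μ₀)
    (a₁ a₂ : ℝ) (ha₁ : 0 < a₁) (ha₂ : 0 < a₂)
    (hmatch : a₂ = a₁ * q * μ₀ ^ (q / 2 - 1))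
    (f : ℝ → ℝ → ℝ)
    (hf : ∀ m x : ℝ,
      f m x = (Real.sqrt (2 * Real.pi * m ^ q))⁻¹ * Real.exp (-(x - m) ^ 2 / (2 * m ^ q)))
    (J : ℝ → ℝ)
    (hJ : ∀ μ : ℝ,
      J μ = a₁ * |1 + q * (μ₀ - μ) / (2 * μ)| + q / 2 * a₂ * μ₀ ^ (q / 2) / μ)
    (I : ℝ → ℝ) (hI : ∀ μ : ℝ, I μ = μ ^ (-q) + q ^ 2 / (2 * μ ^ 2))
    (m₃ : ℝ → ℝ)
    (hm₃ : ∀ μ : ℝ,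
      m₃ μ = ∫ x : ℝ, iteratedDeriv 3 (fun m => Real.log (f m x)) μ * f μ x) :
    (J μ₀)⁻¹ *
        ((1 / 6) * deriv (fun μ => (I μ ^ 2)⁻¹ * J μ * m₃ μ) μ₀ -
          (1 / 2) * iteratedDeriv 2 (fun μ => J μ * (I μ)⁻¹) μ₀)
      = q * (q - 2) * μ₀ ^ (q + 2) * (2 * μ₀ ^ 2 + μ₀ ^ q * q * (q - 1)) /
          (2 * μ₀ ^ 2 + μ₀ ^ q * q ^ 2) ^ 3 ∧
    (q = 2 →
      (J μ₀)⁻¹ *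
          ((1 / 6) * deriv (fun μ => (I μ ^ 2)⁻¹ * J μ * m₃ μ) μ₀ -
            (1 / 2) * iteratedDeriv 2 (fun μ => J μ * (I μ)⁻¹) μ₀) = 0) := by
  have key := main_part q μ₀ hq hμ₀ a₁ a₂ ha₁ ha₂ hmatch f hf J hJ I hI m₃ hm₃
  refine ⟨key, fun h2 => ?_⟩
  rw [key, h2]
  norm_num
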